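/- arXiv:1307.4458 — 3 statements merged into one kernel-verified Lean document; each statement's English description precedes it below -/
import Mathlib

section
/- Let X be a compactly generated topological space with a distinguished family F of compact sets, and let 𝒜 → X be a C*-bundle over X. Then the *-algebra Γ(𝒜) of continuous sections, equipped with the topology generated by the C*-seminorms ‖φ‖_K = sup_{x∈K} ‖φ(x)‖_x for K ∈ F, is a locally C*-algebra (i.e., this topology is Hausdorff, complete, and generated by C*-seminorms). -/
open Filter Topology Set

private lemma usc_comp_continuous' {X Y : Type*} [TopologicalSpace X] [TopologicalSpace Y]
    {f : Y → ℝ} {g : X → Y} (hf : UpperSemicontinuous f) (hg : Continuous g) :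
    UpperSemicontinuous (f ∘ g) := fun x c hc =>
  (hg.tendsto x).eventually (hf (g x) c hc)

private lemma usc_bddAbove_compact' {X : Type*} [TopologicalSpace X] {f : X → ℝ}
    (hf : UpperSemicontinuous f) {K : Set X} (hK : IsCompact K) :
    BddAbove (f '' K) := by
  obtain ⟨t, ht⟩ := hK.elim_nhds_subcover' (fun x _ => {y | f y < f x + 1})
    (fun x _ => (hf x (f x + 1) (lt_add_one _)))
  obtain ⟨b, hb⟩ := (t.finite_toSet.image fun x => f x.1 + 1).bddAbove
  refine ⟨b, ?_⟩
  rintro - ⟨y, hy, rfl⟩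
  obtain ⟨x, hx, hyx⟩ := Set.mem_iUnion₂.1 (ht hy)
  exact le_trans (le_of_lt hyx) (hb ⟨x, hx, rfl⟩)

/-- An (upper semicontinuous) C*-bundle over `X`, presented as a family of C*-algebras
`A x` together with a topology on the total space `Σ x, A x`: the projection is a
continuous open surjection, the fiberwise operations are continuous, the fibers carry
the subspace topology, the norm is upper semicontinuous, and any net whose norms tend
to `0` and whose base points tend to `x` converges to the zero element `0_x`. -/
structure IsCStarBundle (X : Type) [TopologicalSpace X] (A : X → Type)
    [∀ x, NormedRing (A x)] [∀ x, StarRing (A x)] [∀ x, CStarRing (A x)]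
    [∀ x, NormedAlgebra ℂ (A x)] [∀ x, StarModule ℂ (A x)] [∀ x, CompleteSpace (A x)]
    [TopologicalSpace (Σ x, A x)] : Prop where
  continuous_proj : Continuous (Sigma.fst : (Σ x, A x) → X)
  isOpenMap_proj : IsOpenMap (Sigma.fst : (Σ x, A x) → X)
  inducing_fiber : ∀ x : X, Topology.IsInducing (fun a : A x => (⟨x, a⟩ : Σ x, A x))
  continuous_add : Continuous fun p : {p : (Σ x, A x) × (Σ x, A x) // p.1.1 = p.2.1} =>
    (⟨p.1.1.1, p.1.1.2 + cast (congrArg A p.2).symm p.1.2.2⟩ : Σ x, A x)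
  continuous_mul : Continuous fun p : {p : (Σ x, A x) × (Σ x, A x) // p.1.1 = p.2.1} =>
    (⟨p.1.1.1, p.1.1.2 * cast (congrArg A p.2).symm p.1.2.2⟩ : Σ x, A x)
  continuous_smul : Continuous fun q : ℂ × (Σ x, A x) => (⟨q.2.1, q.1 • q.2.2⟩ : Σ x, A x)
  continuous_star : Continuous fun a : (Σ x, A x) => (⟨a.1, star a.2⟩ : Σ x, A x)
  usc_norm : UpperSemicontinuous fun a : (Σ x, A x) => ‖a.2‖
  tendsto_zero : ∀ {ι : Type} (l : Filter ι) (f : ι → Σ x, A x) (x : X),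
    Filter.Tendsto (fun i => ‖(f i).2‖) l (nhds 0) →
    Filter.Tendsto (fun i => (f i).1) l (nhds x) →
    Filter.Tendsto f l (nhds (⟨x, 0⟩ : Σ x, A x))

/-- A continuous section of the bundle. -/
def IsContinuousSection {X : Type} [TopologicalSpace X] {A : X → Type}
    [TopologicalSpace (Σ x, A x)] (φ : ∀ x, A x) : Prop :=
  Continuous fun x : X => (⟨x, φ x⟩ : Σ x, A x)

/-- A distinguished family of compact sets on `X`: it contains all singletons, consists
of compact sets, is closed under passing to compact subsets and under finite unions, and
`X` carries the direct limit topology determined by it (a set is closed/open iff its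
trace on each member of the family is). -/
structure IsDistinguishedFamily (X : Type) [TopologicalSpace X] (F : Set (Set X)) :
    Prop where
  singleton_mem : ∀ x : X, {x} ∈ F
  compact_mem : ∀ K ∈ F, IsCompact K
  compact_subset_mem : ∀ K ∈ F, ∀ L ⊆ K, IsCompact L → L ∈ F
  union_mem : ∀ K ∈ F, ∀ L ∈ F, K ∪ L ∈ F
  directLimit : Topology.IsCoherentWith F

/-- for a compactly generated space `X` with distinguished family `F` of
compact sets and a C*-bundle `𝒜 → X`, the *-algebra `Γ(𝒜)` of continuous sections with
the topology generated by the C*-seminorms `‖φ‖_K = ⨆_{x ∈ K} ‖φ x‖`, `K ∈ F`, is a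
locally C*-algebra: the `‖·‖_K` are finite C*-seminorms, the topology they generate is
Hausdorff (they jointly separate points from 0) and complete (every Cauchy net of
sections, uniformly Cauchy on each `K ∈ F`, converges uniformly on each `K ∈ F` to a
continuous section). -/
theorem sections_compactly_generated_locally_cstar
    (X : Type) [TopologicalSpace X] (F : Set (Set X)) (hF : IsDistinguishedFamily X F)
    (A : X → Type)
    [∀ x, NormedRing (A x)] [∀ x, StarRing (A x)] [∀ x, CStarRing (A x)]
    [∀ x, NormedAlgebra ℂ (A x)] [∀ x, StarModule ℂ (A x)] [∀ x, CompleteSpace (A x)]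
    [TopologicalSpace (Σ x, A x)] (hbundle : IsCStarBundle X A) :
    -- Γ(𝒜) is a *-subalgebra of Π x, A x for the pointwise operations
    (IsContinuousSection (0 : ∀ x, A x)) ∧
    (∀ φ ψ : ∀ x, A x, IsContinuousSection φ → IsContinuousSection ψ →
      IsContinuousSection (φ + ψ) ∧ IsContinuousSection (φ * ψ)) ∧
    (∀ (c : ℂ) (φ : ∀ x, A x), IsContinuousSection φ → IsContinuousSection (c • φ)) ∧
    (∀ φ : ∀ x, A x, IsContinuousSection φ → IsContinuousSection (star φ)) ∧
    -- each ‖·‖_K is a finite C*-seminorm on Γ(𝒜)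
    (∀ K ∈ F, ∀ φ : ∀ x, A x, IsContinuousSection φ →
      BddAbove (Set.range fun x : K => ‖φ x.1‖)) ∧
    (∀ K ∈ F, ∀ φ ψ : ∀ x, A x, IsContinuousSection φ → IsContinuousSection ψ →
      (⨆ x : K, ‖(φ + ψ) x.1‖) ≤ (⨆ x : K, ‖φ x.1‖) + (⨆ x : K, ‖ψ x.1‖) ∧
      (⨆ x : K, ‖(φ * ψ) x.1‖) ≤ (⨆ x : K, ‖φ x.1‖) * (⨆ x : K, ‖ψ x.1‖)) ∧
    (∀ K ∈ F, ∀ (c : ℂ) (φ : ∀ x, A x), IsContinuousSection φ →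
      (⨆ x : K, ‖(c • φ) x.1‖) = ‖c‖ * ⨆ x : K, ‖φ x.1‖) ∧
    (∀ K ∈ F, ∀ φ : ∀ x, A x, IsContinuousSection φ →
      (⨆ x : K, ‖(star φ) x.1‖) = (⨆ x : K, ‖φ x.1‖) ∧
      (⨆ x : K, ‖(star φ * φ) x.1‖) = (⨆ x : K, ‖φ x.1‖) ^ 2) ∧
    -- the topology generated by the ‖·‖_K is Hausdorff
    (∀ φ : ∀ x, A x, IsContinuousSection φ → (∀ K ∈ F, (⨆ x : K, ‖φ x.1‖) = 0) →
      φ = 0) ∧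
    -- and complete
    (∀ (ι : Type) (_ : Nonempty ι) (_ : SemilatticeSup ι) (u : ι → ∀ x, A x),
      (∀ n, IsContinuousSection (u n)) →
      (∀ K ∈ F, ∀ ε : ℝ, 0 < ε → ∃ n₀ : ι, ∀ m n : ι, n₀ ≤ m → n₀ ≤ n →
        ∀ x ∈ K, ‖u m x - u n x‖ ≤ ε) →
      ∃ φ : ∀ x, A x, IsContinuousSection φ ∧
        ∀ K ∈ F, ∀ ε : ℝ, 0 < ε → ∃ n₀ : ι, ∀ n : ι, n₀ ≤ n →
          ∀ x ∈ K, ‖u n x - φ x‖ ≤ ε) := by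
  classical
  -- continuity of the zero section
  have hzero : IsContinuousSection (0 : ∀ x, A x) := by
    rw [IsContinuousSection, continuous_iff_continuousAt]
    intro x
    exact hbundle.tendsto_zero (𝓝 x) _ x
      (by simpa using (tendsto_const_nhds : Tendsto (fun _ : X => (0:ℝ)) (𝓝 x) (𝓝 0)))
      tendsto_id
  have haddmul : ∀ φ ψ : ∀ x, A x, IsContinuousSection φ → IsContinuousSection ψ →
      IsContinuousSection (φ + ψ) ∧ IsContinuousSection (φ * ψ) := by
    intro φ ψ hφ hψ
    have hpair : Continuous fun x : X =>
        (⟨(⟨x, φ x⟩, ⟨x, ψ x⟩), rfl⟩ : {p : (Σ x, A x) × (Σ x, A x) // p.1.1 = p.2.1}) :=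
      Continuous.subtype_mk (hφ.prodMk hψ) _
    exact ⟨hbundle.continuous_add.comp hpair, hbundle.continuous_mul.comp hpair⟩
  have hsmul : ∀ (c : ℂ) (φ : ∀ x, A x), IsContinuousSection φ →
      IsContinuousSection (c • φ) := by
    intro c φ hφ
    exact hbundle.continuous_smul.comp (continuous_const.prodMk hφ)
  have hstar : ∀ φ : ∀ x, A x, IsContinuousSection φ → IsContinuousSection (star φ) := by
    intro φ hφ
    exact hbundle.continuous_star.comp hφ
  have hbdd : ∀ K ∈ F, ∀ φ : ∀ x, A x, IsContinuousSection φ →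
      BddAbove (Set.range fun x : K => ‖φ x.1‖) := by
    intro K hK φ hφ
    have h1 : UpperSemicontinuous fun x : X => ‖φ x‖ :=
      usc_comp_continuous' hbundle.usc_norm hφ
    have h2 := usc_bddAbove_compact' h1 (hF.compact_mem K hK)
    rwa [Set.image_eq_range] at h2
  have hnn : ∀ (K : Set X) (φ : ∀ x, A x), 0 ≤ ⨆ x : K, ‖φ x.1‖ := fun K φ =>
    Real.iSup_nonneg fun x => norm_nonneg _
  refine ⟨hzero, haddmul, hsmul, hstar, hbdd, ?_, ?_, ?_, ?_, ?_⟩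
  · -- subadditive and submultiplicative
    intro K hK φ ψ hφ hψ
    rcases isEmpty_or_nonempty K with h | h
    · constructor <;> simp only [Real.iSup_of_isEmpty] <;> positivity
    constructor
    · refine ciSup_le fun x => ?_
      calc ‖(φ + ψ) x.1‖ ≤ ‖φ x.1‖ + ‖ψ x.1‖ := norm_add_le _ _
        _ ≤ _ := add_le_add (le_ciSup (hbdd K hK φ hφ) x) (le_ciSup (hbdd K hK ψ hψ) x)
    · refine ciSup_le fun x => ?_
      calc ‖(φ * ψ) x.1‖ ≤ ‖φ x.1‖ * ‖ψ x.1‖ := norm_mul_le _ _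
        _ ≤ _ := mul_le_mul (le_ciSup (hbdd K hK φ hφ) x) (le_ciSup (hbdd K hK ψ hψ) x)
            (norm_nonneg _) (hnn K φ)
  · -- homogeneous
    intro K hK c φ hφ
    have : ∀ x : K, ‖(c • φ) x.1‖ = ‖c‖ * ‖φ x.1‖ := fun x => norm_smul c (φ x.1)
    rw [iSup_congr this, ← Real.mul_iSup_of_nonneg (norm_nonneg c)]
  · -- star and C* identity
    intro K hK φ hφ
    constructor
    · exact iSup_congr fun x => norm_star (φ x.1)
    · have h1 : ∀ x : K, ‖(star φ * φ) x.1‖ = ‖φ x.1‖ * ‖φ x.1‖ := fun x =>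
        CStarRing.norm_star_mul_self
      rw [iSup_congr h1]
      rcases isEmpty_or_nonempty K with h | h
      · simp [Real.iSup_of_isEmpty]
      have hb := hbdd K hK φ hφ
      have hs0 : 0 ≤ ⨆ x : K, ‖φ x.1‖ := hnn K φ
      have hbsq : BddAbove (Set.range fun x : K => ‖φ x.1‖ * ‖φ x.1‖) := by
        obtain ⟨b, hbb⟩ := hb
        refine ⟨b * b, ?_⟩
        rintro - ⟨x, rfl⟩
        have h2 : ‖φ x.1‖ ≤ b := hbb ⟨x, rfl⟩
        exact mul_le_mul h2 h2 (norm_nonneg _) ((norm_nonneg _).trans h2)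
      have hT0 : 0 ≤ ⨆ x : K, ‖φ x.1‖ * ‖φ x.1‖ :=
        Real.iSup_nonneg fun x => mul_nonneg (norm_nonneg _) (norm_nonneg _)
      apply le_antisymm
      · refine ciSup_le fun x => ?_
        have h2 := le_ciSup hb x
        rw [sq]
        exact mul_le_mul h2 h2 (norm_nonneg _) hs0
      · have hsqrt : ∀ x : K, ‖φ x.1‖ ≤ Real.sqrt (⨆ y : K, ‖φ y.1‖ * ‖φ y.1‖) := by
          intro x
          have h2 : ‖φ x.1‖ * ‖φ x.1‖ ≤ ⨆ y : K, ‖φ y.1‖ * ‖φ y.1‖ := le_ciSup hbsq x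
          calc ‖φ x.1‖ = Real.sqrt (‖φ x.1‖ * ‖φ x.1‖) :=
                (Real.sqrt_mul_self (norm_nonneg _)).symm
            _ ≤ _ := Real.sqrt_le_sqrt h2
        calc (⨆ x : K, ‖φ x.1‖) ^ 2
            ≤ (Real.sqrt (⨆ y : K, ‖φ y.1‖ * ‖φ y.1‖)) ^ 2 := by
              have := ciSup_le hsqrt
              exact pow_le_pow_left₀ hs0 this 2
          _ = _ := Real.sq_sqrt hT0
  · -- Hausdorff
    intro φ hφ h
    funext x
    have h1 := h {x} (hF.singleton_mem x)
    have h2 : (⨆ y : ({x} : Set X), ‖φ y.1‖) = ‖φ x‖ := by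
      haveI : Nonempty ({x} : Set X) := ⟨⟨x, rfl⟩⟩
      have h3 : ∀ y : ({x} : Set X), ‖φ y.1‖ = ‖φ x‖ := fun y => by
        rw [Set.mem_singleton_iff.1 y.2]
      rw [iSup_congr h3, ciSup_const]
    rw [h2] at h1
    simpa using norm_eq_zero.mp h1
  · -- completeness
    intro ι hne hsl u hu hcau
    letI := hne
    letI := hsl
    have hcauchy : ∀ x : X, CauchySeq fun n => u n x := by
      intro x
      rw [Metric.cauchySeq_iff]
      intro ε hε
      obtain ⟨n₀, hn₀⟩ := hcau {x} (hF.singleton_mem x) (ε / 2) (by linarith)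
      refine ⟨n₀, fun m hm n hn => ?_⟩
      have h1 := hn₀ m n hm hn x (Set.mem_singleton x)
      rw [dist_eq_norm]
      linarith
    have hconv : ∀ x : X, ∃ a : A x, Tendsto (fun n => u n x) atTop (𝓝 a) := fun x =>
      cauchySeq_tendsto_of_complete (hcauchy x)
    choose φ hφlim using hconv
    have hunif : ∀ K ∈ F, ∀ ε : ℝ, 0 < ε → ∃ n₀, ∀ n, n₀ ≤ n →
        ∀ x ∈ K, ‖u n x - φ x‖ ≤ ε := by
      intro K hK ε hε
      obtain ⟨n₀, hn₀⟩ := hcau K hK ε hε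
      refine ⟨n₀, fun n hn x hx => ?_⟩
      have ht : Tendsto (fun m => ‖u n x - u m x‖) atTop (𝓝 ‖u n x - φ x‖) :=
        (tendsto_const_nhds.sub (hφlim x)).norm
      exact le_of_tendsto ht (eventually_atTop.2 ⟨n₀, fun m hm => hn₀ n m hn hm x hx⟩)
    refine ⟨φ, ?_, hunif⟩
    rw [IsContinuousSection, hF.directLimit.continuous_iff]
    intro K hK x₀ hx₀
    have hx : Tendsto (fun n => (⟨x₀, u n x₀⟩ : Σ x, A x)) atTop (𝓝 ⟨x₀, φ x₀⟩) :=
      ((hbundle.inducing_fiber x₀).continuous.tendsto (φ x₀)).comp (hφlim x₀)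
    rw [ContinuousWithinAt, tendsto_def]
    intro U hU
    -- continuity of addition at (σ(x₀), 0_{x₀})
    set p₀ : {p : (Σ x, A x) × (Σ x, A x) // p.1.1 = p.2.1} :=
      ⟨(⟨x₀, φ x₀⟩, ⟨x₀, 0⟩), rfl⟩ with hp₀
    have himg : (fun p : {p : (Σ x, A x) × (Σ x, A x) // p.1.1 = p.2.1} =>
        (⟨p.1.1.1, p.1.1.2 + cast (congrArg A p.2).symm p.1.2.2⟩ : Σ x, A x)) p₀ =
        ⟨x₀, φ x₀⟩ := congrArg (Sigma.mk x₀) (add_zero (φ x₀))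
    have haddc := hbundle.continuous_add.continuousAt (x := p₀)
    have hUmem : U ∈ 𝓝 ((fun p : {p : (Σ x, A x) × (Σ x, A x) // p.1.1 = p.2.1} =>
        (⟨p.1.1.1, p.1.1.2 + cast (congrArg A p.2).symm p.1.2.2⟩ : Σ x, A x)) p₀) :=
      himg.symm ▸ hU
    have hpre := haddc hUmem
    rw [Filter.mem_map, nhds_subtype_eq_comap, Filter.mem_comap] at hpre
    obtain ⟨W, hW, hWsub⟩ := hpre
    rw [mem_nhds_prod_iff'] at hW
    obtain ⟨W₁, W₂, hW₁o, hW₁, hW₂o, hW₂, hWprod⟩ := hW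
    -- the key tube claim for W₂
    have hclaim : ∃ ε > (0:ℝ), ∃ V ∈ 𝓝 x₀, ∀ t : Σ x, A x,
        t.1 ∈ V → ‖t.2‖ < ε → t ∈ W₂ := by
      set l : Filter (Σ x, A x) := 𝓟 W₂ᶜ ⊓
        (comap (fun t : Σ x, A x => ‖t.2‖) (𝓝 0) ⊓ comap Sigma.fst (𝓝 x₀)) with hl
      have h1 : Tendsto (fun t : Σ x, A x => ‖t.2‖) l (𝓝 0) :=
        Filter.tendsto_iff_comap.2 (le_trans inf_le_right inf_le_left)
      have h2 : Tendsto (Sigma.fst : (Σ x, A x) → X) l (𝓝 x₀) :=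
        Filter.tendsto_iff_comap.2 (le_trans inf_le_right inf_le_right)
      have h3 : Tendsto id l (𝓝 (⟨x₀, 0⟩ : Σ x, A x)) :=
        hbundle.tendsto_zero l id x₀ h1 h2
      have h4 : W₂ ∈ l := by
        have h5 := h3 (hW₂o.mem_nhds hW₂)
        rwa [Filter.map_id] at h5
      rw [hl, Filter.mem_inf_iff] at h4
      obtain ⟨t₁, ht₁, t₂, ht₂, hW₂eq⟩ := h4
      rw [Filter.mem_inf_iff] at ht₂
      obtain ⟨s₁, hs₁, s₂, hs₂, ht₂eq⟩ := ht₂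
      obtain ⟨S, hS, hSsub⟩ := hs₁
      obtain ⟨V, hV, hVsub⟩ := hs₂
      obtain ⟨ε, hε, hball⟩ := Metric.mem_nhds_iff.1 hS
      refine ⟨ε, hε, V, hV, fun t htV htε => ?_⟩
      by_contra htW
      apply htW
      rw [hW₂eq]
      refine ⟨Filter.mem_principal.1 ht₁ htW, ?_⟩
      rw [ht₂eq]
      refine ⟨hSsub ?_, hVsub htV⟩
      exact hball (by simpa [Real.dist_eq, abs_of_nonneg (norm_nonneg _)] using htε)
    obtain ⟨ε, hε, V, hV, hVW₂⟩ := hclaim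
    obtain ⟨n₁, hn₁⟩ := hunif K hK (ε / 2) (by linarith)
    have hev : ∀ᶠ n in atTop, (⟨x₀, u n x₀⟩ : Σ x, A x) ∈ W₁ := hx (hW₁o.mem_nhds hW₁)
    obtain ⟨n, hnW₁, hn⟩ := (hev.and (eventually_atTop.2 ⟨n₁, fun n h => hn₁ n h⟩)).exists
    have hev1 : ∀ᶠ x in 𝓝[K] x₀, (⟨x, u n x⟩ : Σ x, A x) ∈ W₁ :=
      (hu n).continuousWithinAt (hW₁o.mem_nhds hnW₁)
    have hev2 : ∀ᶠ x in 𝓝[K] x₀, x ∈ V := mem_nhdsWithin_of_mem_nhds hV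
    have hev3 : ∀ᶠ x in 𝓝[K] x₀, x ∈ K := self_mem_nhdsWithin
    filter_upwards [hev1, hev2, hev3] with x h1 h2 h3
    have hW₂x : (⟨x, φ x - u n x⟩ : Σ x, A x) ∈ W₂ := by
      refine hVW₂ _ h2 ?_
      show ‖φ x - u n x‖ < ε
      calc ‖φ x - u n x‖ = ‖u n x - φ x‖ := norm_sub_rev _ _
        _ ≤ ε / 2 := hn x h3
        _ < ε := by linarith
    set q : {p : (Σ x, A x) × (Σ x, A x) // p.1.1 = p.2.1} :=
      ⟨(⟨x, u n x⟩, ⟨x, φ x - u n x⟩), rfl⟩ with hq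
    have hqW : q ∈ Subtype.val ⁻¹' W := hWprod ⟨h1, hW₂x⟩
    have hqU : (⟨x, u n x + cast (congrArg A (rfl : x = x)).symm (φ x - u n x)⟩ :
        Σ x, A x) ∈ U := hWsub hqW
    have heq : (⟨x, u n x + cast (congrArg A (rfl : x = x)).symm (φ x - u n x)⟩ :
        Σ x, A x) = ⟨x, φ x⟩ := congrArg (Sigma.mk x) (add_sub_cancel (u n x) (φ x))
    show (⟨x, φ x⟩ : Σ x, A x) ∈ U
    exact heq ▸ hqU
end

section
/- Let A be a locally C*-algebra with Michael–Arens decomposition (A_s)_{s∈S(A)}. Then Prim A, equipped with the direct limit topology from the closed subspaces h(ker s) ≅ Prim A_s, is the set-theoretic direct limit of the spaces Prim A_s: the subsets h(ker s), s ∈ S(A), cover Prim A, and for ker s ⊆ ker r the inclusion h(ker r) ⊆ h(ker s) corresponds to the map Prim A_r → Prim A_s induced by the quotient A_s → A_r. -/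
/-- A C*-seminorm on a complex *-algebra. -/
def IsCStarSeminorm {A : Type} [Ring A] [StarRing A] [Algebra ℂ A] (s : A → ℝ) : Prop :=
  (∀ a : A, 0 ≤ s a) ∧ (∀ a b : A, s (a + b) ≤ s a + s b) ∧
  (∀ (c : ℂ) (a : A), s (c • a) = ‖c‖ * s a) ∧
  (∀ a b : A, s (a * b) ≤ s a * s b) ∧ (∀ a : A, s (star a) = s a) ∧
  (∀ a : A, s (star a * a) = (s a) ^ 2)

/-- The directed set `S(A)` of continuous C*-seminorms on a topological *-algebra. -/
def ContCStarSeminorms (A : Type) [Ring A] [StarRing A] [Algebra ℂ A]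
    [TopologicalSpace A] : Set (A → ℝ) :=
  {s | Continuous s ∧ IsCStarSeminorm s}

/-- `A` is a locally C*-algebra: a complete Hausdorff topological *-algebra whose
topology is generated by its (continuous) C*-seminorms. -/
def IsLocallyCStarAlgebra (A : Type) [Ring A] [StarRing A] [Algebra ℂ A]
    [TopologicalSpace A] [IsTopologicalRing A] : Prop :=
  T2Space A ∧ @CompleteSpace A (IsTopologicalAddGroup.rightUniformSpace A) ∧
  ∀ U : Set A, IsOpen U ↔ ∀ a ∈ U,
    ∃ F : Finset {s // s ∈ ContCStarSeminorms A}, ∃ ε : ℝ, 0 < ε ∧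
      {b : A | ∀ s ∈ F, s.1 (b - a) < ε} ⊆ U

/-- A (continuous) irreducible *-representation of a topological complex *-algebra
on a complex Hilbert space: the only closed invariant subspaces are `⊥` and `⊤`. -/
structure IrreducibleRep (A : Type) [Ring A] [StarRing A] [Algebra ℂ A]
    [TopologicalSpace A] where
  H : Type
  [ng : NormedAddCommGroup H]
  [ip : InnerProductSpace ℂ H]
  [cs : CompleteSpace H]
  [nt : Nontrivial H]
  π : A →⋆ₐ[ℂ] (H →L[ℂ] H)
  cont : Continuous π
  irred : ∀ V : Submodule ℂ H, IsClosed (V : Set H) →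
    (∀ a : A, ∀ v ∈ V, π a v ∈ V) → V = ⊥ ∨ V = ⊤

attribute [instance] IrreducibleRep.ng IrreducibleRep.ip IrreducibleRep.cs IrreducibleRep.nt

/-- A primitive ideal: the kernel of some irreducible representation. -/
def IsPrimitiveIdeal {A : Type} [Ring A] [StarRing A] [Algebra ℂ A] [TopologicalSpace A]
    (P : TwoSidedIdeal A) : Prop :=
  ∃ ρ : IrreducibleRep A, ∀ a : A, a ∈ P ↔ ρ.π a = 0

/-- The primitive spectrum of `A`. -/
def PrimSpec (A : Type) [Ring A] [StarRing A] [Algebra ℂ A] [TopologicalSpace A] :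
    Type :=
  {P : TwoSidedIdeal A // IsPrimitiveIdeal P}

/-- The hull of an ideal: the set of primitive ideals containing it. -/
def hkHull {A : Type} [Ring A] [StarRing A] [Algebra ℂ A] [TopologicalSpace A]
    (I : TwoSidedIdeal A) : Set (PrimSpec A) :=
  {P | I ≤ P.val}

/-- The kernel (as a set) of a C*-seminorm. -/
def snKer {A : Type} [Ring A] [StarRing A] [Algebra ℂ A] (s : A → ℝ) :
    TwoSidedIdeal A :=
  sInf {I : TwoSidedIdeal A | {a : A | s a = 0} ⊆ I}

/-- for a locally C*-algebra `A` with Michael–Arens decomposition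
`(A_s)_{s ∈ S(A)}`, `Prim A` is the set-theoretic direct limit of the spaces
`Prim A_s ≅ h(ker s)`: the closed subsets `h(ker s)`, `s ∈ S(A)`, cover `Prim A`
(every irreducible representation factors through some `A_s`), and for
`ker s ⊆ ker r` the inclusion `h(ker r) ⊆ h(ker s)` holds, corresponding to the map
`Prim A_r → Prim A_s` induced by the quotient `A_s → A_r` (which sends a primitive
ideal `P/ker r` of `A_r` to `P/ker s`, i.e. is the identity on the underlying
primitive ideals of `A`). -/
theorem primSpec_direct_limit
    (A : Type) [Ring A] [StarRing A] [Algebra ℂ A] [TopologicalSpace A]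
    [IsTopologicalRing A] [ContinuousStar A] (hA : IsLocallyCStarAlgebra A) :
    -- the subsets h(ker s) cover Prim A
    (⋃ s ∈ ContCStarSeminorms A, hkHull (snKer s)) = (Set.univ : Set (PrimSpec A)) ∧
    -- and for ker s ⊆ ker r, h(ker r) ⊆ h(ker s), the inclusion being induced by the
    -- quotient map A_s → A_r (i.e. given on primitive ideals of A by the identity)
    (∀ s ∈ ContCStarSeminorms A, ∀ r ∈ ContCStarSeminorms A,
      snKer s ≤ snKer r → hkHull (snKer r) ⊆ hkHull (snKer s)) := by
  constructor
  · apply Set.eq_univ_of_forall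
    intro P
    obtain ⟨ρ, hρ⟩ := P.2
    refine Set.mem_iUnion.2 ⟨fun a => ‖ρ.π a‖, Set.mem_iUnion.2 ⟨?_, ?_⟩⟩
    · refine ⟨(continuous_norm.comp ρ.cont), fun a => norm_nonneg _, fun a b => ?_,
        fun c a => ?_, fun a b => ?_, fun a => ?_, fun a => ?_⟩
      · simp only; rw [map_add]; exact norm_add_le _ _
      · simp only; rw [map_smul, norm_smul]
      · simp only; rw [map_mul]; exact norm_mul_le _ _
      · simp only; rw [map_star, norm_star]
      · simp only; rw [map_mul, map_star, CStarRing.norm_star_mul_self, sq]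
    · show snKer (fun a => ‖ρ.π a‖) ≤ P.1
      refine sInf_le ?_
      intro x hx
      exact (hρ x).2 (norm_eq_zero.mp hx)
  · intro s hs r hr hsr P hP
    exact fun a ha => hP (hsr ha)
end

section
/- Let A be a perfect locally C*-algebra. Then the hull-kernel topology and the direct limit topology on Prim A coincide: a subset C ⊆ Prim A is closed in the hull-kernel topology if and only if C ∩ h(ker s) is closed in the hull-kernel topology for every continuous C*-seminorm s on A. -/
/-- The hull-kernel closure operation on subsets of the primitive spectrum. -/
def hkClosure {A : Type} [Ring A] [StarRing A] [Algebra ℂ A] [TopologicalSpace A]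
    (F : Set (PrimSpec A)) : Set (PrimSpec A) :=
  {P | sInf (Subtype.val '' F) ≤ P.val}

/-- The set `Sppd s` of elements supported in the seminorm `s`. -/
def Sppd {A : Type} [Ring A] [StarRing A] [Algebra ℂ A] (s : A → ℝ) : Set A :=
  {a : A | ∀ b : A, s b = 0 → a * b = 0}

/-- `A` is a perfect locally C*-algebra: the sum of the ideals `Sppd s`, `s ∈ S(A)`,
is dense in `A`. -/
def IsPerfect (A : Type) [Ring A] [StarRing A] [Algebra ℂ A] [TopologicalSpace A] :
    Prop :=
  closure (↑(Submodule.span ℂ (⋃ s ∈ ContCStarSeminorms A, Sppd s)) : Set A) =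
    Set.univ

section Aux

variable {A : Type} [Ring A] [StarRing A] [Algebra ℂ A] [TopologicalSpace A]

/-- Key "primeness" lemma for primitive ideals: if `I * J ⊆ P` (elementwise) with `J`
a left-ideal set and `I ⊄ P`, then `J ⊆ P`. -/
lemma primitive_prime (P : TwoSidedIdeal A) (hP : IsPrimitiveIdeal P) (I J : Set A)
    (hJleft : ∀ c : A, ∀ b ∈ J, c * b ∈ J)
    (hIJ : ∀ a ∈ I, ∀ b ∈ J, a * b ∈ P)
    (hI : ¬ I ⊆ (P : Set A)) : ∀ b ∈ J, b ∈ P := by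
  obtain ⟨ρ, hρ⟩ := hP
  set S : Set ρ.H := {w | ∃ b ∈ J, ∃ v, ρ.π b v = w} with hS
  set W : Submodule ℂ ρ.H := (Submodule.span ℂ S).topologicalClosure with hW
  have hspanW : Submodule.span ℂ S ≤ W := Submodule.le_topologicalClosure _
  have hWcoe : (W : Set ρ.H) = closure ((Submodule.span ℂ S : Submodule ℂ ρ.H) : Set ρ.H) :=
    rfl
  have hWclosed : IsClosed (W : Set ρ.H) := Submodule.isClosed_topologicalClosure _
  have hInv : ∀ a : A, ∀ v ∈ W, ρ.π a v ∈ W := by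
    intro a v hv
    have hSS : ρ.π a '' S ⊆ S := by
      rintro _ ⟨w, ⟨b, hb, u, rfl⟩, rfl⟩
      exact ⟨a * b, hJleft a b hb, u, by
        rw [map_mul, ContinuousLinearMap.mul_apply]⟩
    have hmap : Set.MapsTo (ρ.π a) ((Submodule.span ℂ S : Submodule ℂ ρ.H) : Set ρ.H)
        ((Submodule.span ℂ S : Submodule ℂ ρ.H) : Set ρ.H) := by
      intro w hw
      have : (Submodule.span ℂ S).map (ρ.π a : ρ.H →ₗ[ℂ] ρ.H) ≤ Submodule.span ℂ S := by
        rw [Submodule.map_span]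
        exact Submodule.span_mono hSS
      exact this ⟨w, hw, rfl⟩
    exact hmap.closure (ρ.π a).continuous hv
  rcases ρ.irred W hWclosed hInv with hbot | htop
  · intro b hb
    rw [hρ]
    ext v
    have : ρ.π b v ∈ W := hspanW (Submodule.subset_span ⟨b, hb, v, rfl⟩)
    rw [hbot] at this
    simpa using this
  · exfalso
    obtain ⟨a, haI, haP⟩ := Set.not_subset.mp hI
    have hπa : ρ.π a ≠ 0 := fun h => haP ((hρ a).mpr h)
    have hker : W ≤ LinearMap.ker (ρ.π a : ρ.H →ₗ[ℂ] ρ.H) := by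
      refine Submodule.topologicalClosure_minimal _ ?_ ?_
      · rw [Submodule.span_le]
        rintro _ ⟨b, hb, v, rfl⟩
        have : ρ.π (a * b) = 0 := (hρ _).mp (hIJ a haI b hb)
        simp only [SetLike.mem_coe, LinearMap.mem_ker, ContinuousLinearMap.coe_coe]
        rw [← ContinuousLinearMap.mul_apply, ← map_mul, this, ContinuousLinearMap.zero_apply]
      · exact ContinuousLinearMap.isClosed_ker _
    rw [htop, top_le_iff] at hker
    refine hπa ?_
    ext v
    have hv : v ∈ LinearMap.ker (ρ.π a : ρ.H →ₗ[ℂ] ρ.H) := by rw [hker]; trivial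
    simpa using hv

lemma mem_snKer {s : A → ℝ} (hs : IsCStarSeminorm s) (a : A) :
    a ∈ snKer s ↔ s a = 0 := by
  obtain ⟨hpos, hadd, hsmul, hmul, -, -⟩ := hs
  have hzero : s 0 = 0 := by
    have := hsmul 0 0
    simpa using this
  set Z : TwoSidedIdeal A := TwoSidedIdeal.mk' {a : A | s a = 0}
    hzero
    (fun {x y} hx hy => le_antisymm (by
      calc s (x + y) ≤ s x + s y := hadd x y
      _ = 0 := by rw [Set.mem_setOf_eq] at hx hy; rw [hx, hy, add_zero]) (hpos _))
    (fun {x} hx => by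
      rw [Set.mem_setOf_eq] at hx ⊢
      have : s (-x) = s ((-1 : ℂ) • x) := by rw [neg_one_smul]
      rw [this, hsmul, hx, mul_zero])
    (fun {x y} hy => le_antisymm (by
      calc s (x * y) ≤ s x * s y := hmul x y
      _ = 0 := by rw [Set.mem_setOf_eq] at hy; rw [hy, mul_zero]) (hpos _))
    (fun {x y} hx => le_antisymm (by
      calc s (x * y) ≤ s x * s y := hmul x y
      _ = 0 := by rw [Set.mem_setOf_eq] at hx; rw [hx, zero_mul]) (hpos _))
    with hZ
  constructor
  · intro ha
    have hle : snKer s ≤ Z := sInf_le (by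
      intro x hx
      exact (TwoSidedIdeal.mem_mk' _ _ _ _ _ _ x).mpr hx)
    have := hle ha
    rw [hZ] at this
    exact (TwoSidedIdeal.mem_mk' _ _ _ _ _ _ a).mp this
  · intro ha
    rw [snKer, TwoSidedIdeal.mem_sInf]
    intro I hI
    exact hI ha

lemma primitive_one_not_mem (P : TwoSidedIdeal A) (hP : IsPrimitiveIdeal P) :
    (1 : A) ∉ P := by
  obtain ⟨ρ, hρ⟩ := hP
  intro h
  have h1 : ρ.π 1 = 0 := (hρ 1).mp h
  rw [map_one] at h1
  obtain ⟨v, hv⟩ := exists_ne (0 : ρ.H)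
  have := DFunLike.congr_fun h1 v
  rw [ContinuousLinearMap.one_apply, ContinuousLinearMap.zero_apply] at this
  exact hv this

lemma primitive_isClosed (P : TwoSidedIdeal A) (hP : IsPrimitiveIdeal P) :
    IsClosed (P : Set A) := by
  obtain ⟨ρ, hρ⟩ := hP
  have : (P : Set A) = ρ.π ⁻¹' {0} := by
    ext a
    simp [hρ a]
  rw [this]
  exact isClosed_singleton.preimage ρ.cont

lemma exists_sppd_not_subset (hperf : IsPerfect A) (P : TwoSidedIdeal A)
    (hP : IsPrimitiveIdeal P) :
    ∃ s ∈ ContCStarSeminorms A, ¬ Sppd s ⊆ (P : Set A) := by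
  by_contra hcon
  push_neg at hcon
  -- P as a ℂ-submodule
  set Psub : Submodule ℂ A :=
    { carrier := (P : Set A)
      add_mem' := fun hx hy => P.add_mem hx hy
      zero_mem' := P.zero_mem
      smul_mem' := fun c x hx => by
        rw [Algebra.smul_def]
        exact P.mul_mem_left _ _ hx } with hPsub
  have hsub : Submodule.span ℂ (⋃ s ∈ ContCStarSeminorms A, Sppd s) ≤ Psub := by
    rw [Submodule.span_le]
    refine Set.iUnion₂_subset ?_
    intro s hs
    exact hcon s hs
  have hclos : closure (↑(Submodule.span ℂ (⋃ s ∈ ContCStarSeminorms A, Sppd s)) : Set A)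
      ⊆ (P : Set A) := by
    refine closure_minimal hsub (primitive_isClosed P hP)
  rw [hperf] at hclos
  exact primitive_one_not_mem P hP (hclos (Set.mem_univ 1))

end Aux

/-- for a perfect locally C*-algebra `A`, the hull-kernel topology and
the direct limit topology on `Prim A` coincide: a subset `C` is hull-kernel closed if
and only if `C ∩ h(ker s)` is hull-kernel closed for every continuous C*-seminorm `s`
on `A`. -/
theorem perfect_hull_kernel_eq_direct_limit
    (A : Type) [Ring A] [StarRing A] [Algebra ℂ A] [TopologicalSpace A]
    [IsTopologicalRing A] [ContinuousStar A]
    (hA : IsLocallyCStarAlgebra A) (hperf : IsPerfect A) :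
    ∀ C : Set (PrimSpec A), hkClosure C = C ↔
      ∀ s ∈ ContCStarSeminorms A,
        hkClosure (C ∩ hkHull (snKer s)) = C ∩ hkHull (snKer s) := by
  intro C
  have hsubset : ∀ D : Set (PrimSpec A), D ⊆ hkClosure D := by
    intro D P hP
    show sInf (Subtype.val '' D) ≤ P.val
    exact sInf_le (Set.mem_image_of_mem _ hP)
  constructor
  · -- forward: pure lattice theory
    intro h s hs
    refine Set.Subset.antisymm ?_ (hsubset _)
    intro P hP
    have hP' : sInf (Subtype.val '' (C ∩ hkHull (snKer s))) ≤ P.val := hP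
    constructor
    · -- P ∈ C
      rw [← h]
      refine le_trans (sInf_le_sInf ?_) hP'
      exact Set.image_mono Set.inter_subset_left
    · -- snKer s ≤ P.val
      refine le_trans ?_ hP'
      refine le_sInf ?_
      rintro I ⟨Q, ⟨-, hQ2⟩, rfl⟩
      exact hQ2
  · -- backward: the main argument
    intro h
    refine Set.Subset.antisymm ?_ (hsubset _)
    intro P hPcl
    have hKC : sInf (Subtype.val '' C) ≤ P.val := hPcl
    obtain ⟨s₀, hs₀S, hs₀⟩ := exists_sppd_not_subset hperf P.val P.prop
    have hs₀cs : IsCStarSeminorm s₀ := hs₀S.2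
    -- Step (a)/(b): for any primitive ideal Q, either Sppd s₀ ⊆ Q or snKer s₀ ≤ Q
    have dichotomy : ∀ Q : TwoSidedIdeal A, IsPrimitiveIdeal Q →
        ¬ Sppd s₀ ⊆ (Q : Set A) → snKer s₀ ≤ Q := by
      intro Q hQ hnot
      intro b hb
      refine primitive_prime Q hQ (Sppd s₀) (snKer s₀ : Set A) ?_ ?_ hnot b hb
      · intro c b hb
        exact (snKer s₀).mul_mem_left c b hb
      · intro a ha b hb
        have hb0 : s₀ b = 0 := (mem_snKer hs₀cs b).mp hb
        have : a * b = 0 := ha b hb0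
        rw [this]
        exact Q.zero_mem
    -- key product property
    set K : TwoSidedIdeal A := sInf (Subtype.val '' (C ∩ hkHull (snKer s₀))) with hK
    have hprod : ∀ a ∈ Sppd s₀, ∀ b ∈ K, a * b ∈ P.val := by
      intro a ha b hb
      refine hKC ?_
      rw [TwoSidedIdeal.mem_sInf]
      rintro I ⟨Q, hQC, rfl⟩
      by_cases hcase : snKer s₀ ≤ Q.val
      · have hQmem : Q ∈ C ∩ hkHull (snKer s₀) := ⟨hQC, hcase⟩
        have : K ≤ Q.val := by
          rw [hK]; exact sInf_le (Set.mem_image_of_mem _ hQmem)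
        exact Q.val.mul_mem_left _ _ (this hb)
      · have hSppdQ : Sppd s₀ ⊆ (Q.val : Set A) := by
          by_contra hno
          exact hcase (dichotomy Q.val Q.prop hno)
        exact Q.val.mul_mem_right _ _ (hSppdQ ha)
    have hKP : K ≤ P.val := by
      intro b hb
      refine primitive_prime P.val P.prop (Sppd s₀) (K : Set A) ?_ hprod hs₀ b hb
      intro c b hb
      exact K.mul_mem_left c b hb
    have : P ∈ hkClosure (C ∩ hkHull (snKer s₀)) := hKP
    rw [h s₀ hs₀S] at this
    exact this.1
end
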